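/- arXiv:2510.15640 — 2 statements merged into one kernel-verified Lean document; each statement's English description precedes it below -/
import Mathlib

section
/- Let r: V→A be a (φ,ψ)-twisted O-operator on a Nambu-Poisson algebra (A, ·, {,,}) over a field k of characteristic 0 with respect to a representation (V;μ,ρ). Then V carries a Nambu-Poisson algebra structure with operations u·_r v := μ(r(u))v + μ(r(v))u + φ(r(u),r(v)) and {u,v,w}_r := ρ(r(u),r(v))w + ρ(r(v),r(w))u + ρ(r(w),r(u))v + ψ(r(u),r(v),r(w)), and with this structure r: (V, ·_r, {,,}_r) → (A, ·, {,,}) is a homomorphism of Nambu-Poisson algebras, i.e. r(u·_r v) = r(u)·r(v) and r({u,v,w}_r) = {r(u),r(v),r(w)}. -/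
namespace NPPaper

variable {A V : Type*} [AddCommGroup A] [AddCommGroup V]

/-- A commutative associative multiplication (axioms on a plain binary operation). -/
def IsCommAssocFun (m : A → A → A) : Prop :=
  (∀ a b, m a b = m b a) ∧ (∀ a b c, m (m a b) c = m a (m b c))

/-- A 3-Lie bracket: skew-symmetric and satisfying the fundamental identity. -/
def IsThreeLieFun (br : A → A → A → A) : Prop :=
  (∀ a b c, br a b c = - br b a c) ∧ (∀ a b c, br a b c = - br a c b) ∧
  (∀ a b c d e, br a b (br c d e) =
      br (br a b c) d e + br c (br a b d) e + br c d (br a b e))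

/-- A Nambu-Poisson structure: commutative associative product, 3-Lie bracket,
and the Leibniz rule. -/
def IsNambuPoissonFun (m : A → A → A) (br : A → A → A → A) : Prop :=
  IsCommAssocFun m ∧ IsThreeLieFun br ∧
  (∀ a b c d, br a b (m c d) = m (br a b c) d + m c (br a b d))

/-- A representation of a 3-Lie algebra (pointwise form, skew-symmetry included). -/
def IsThreeLieRepFun (br : A → A → A → A) (ρ : A → A → V → V) : Prop :=
  (∀ a b v, ρ a b v = - ρ b a v) ∧
  (∀ a b c d v, ρ a b (ρ c d v) - ρ c d (ρ a b v) =
      ρ (br a b c) d v + ρ c (br a b d) v) ∧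
  (∀ a b c d v, ρ (br a b c) d v =
      ρ a b (ρ c d v) + ρ b c (ρ a d v) + ρ c a (ρ b d v))

/-- A representation of a Nambu-Poisson algebra (pointwise form). -/
def IsNPRepFun (m : A → A → A) (br : A → A → A → A)
    (μ : A → V → V) (ρ : A → A → V → V) : Prop :=
  (∀ a b v, μ (m a b) v = μ a (μ b v)) ∧
  IsThreeLieRepFun br ρ ∧
  (∀ a b c v, μ (br a b c) v = ρ a b (μ c v) - μ c (ρ a b v)) ∧
  (∀ a b c v, ρ a (m b c) v = μ b (ρ a c v) + μ c (ρ a b v))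

/-- A Harrison 2-cocycle of a commutative associative algebra with coefficients
in a representation. -/
def IsHarrison2CocycleFun (m : A → A → A) (μ : A → V → V) (φ : A → A → V) : Prop :=
  (∀ a b, φ a b = φ b a) ∧
  (∀ a b c, μ a (φ b c) - φ (m a b) c + φ a (m b c) - μ c (φ a b) = 0)

/-- A 2-cocycle of a 3-Lie algebra with coefficients in a representation. -/
def IsThreeLie2CocycleFun (br : A → A → A → A) (ρ : A → A → V → V)
    (ψ : A → A → A → V) : Prop :=
  (∀ a b c, ψ a b c = - ψ b a c) ∧ (∀ a b c, ψ a b c = - ψ a c b) ∧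
  (∀ a b c d e, ψ a b (br c d e) + ρ a b (ψ c d e) =
      ψ (br a b c) d e + ψ c (br a b d) e + ψ c d (br a b e)
      + ρ d e (ψ a b c) + ρ e c (ψ a b d) + ρ c d (ψ a b e))

/-- A Nambu-Poisson 2-cocycle. -/
def IsNP2CocycleFun (m : A → A → A) (br : A → A → A → A)
    (μ : A → V → V) (ρ : A → A → V → V)
    (φ : A → A → V) (ψ : A → A → A → V) : Prop :=
  IsHarrison2CocycleFun m μ φ ∧ IsThreeLie2CocycleFun br ρ ψ ∧
  (∀ a b c d, ψ a b (m c d) + ρ a b (φ c d) =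
      φ c (br a b d) + μ c (ψ a b d) + φ (br a b c) d + μ d (ψ a b c))

/-- A Poisson algebra structure. -/
def IsPoissonFun (m : A → A → A) (pb : A → A → A) : Prop :=
  IsCommAssocFun m ∧
  (∀ a b, pb a b = - pb b a) ∧
  (∀ a b c, pb a (pb b c) = pb (pb a b) c + pb b (pb a c)) ∧
  (∀ a b c, pb a (m b c) = m (pb a b) c + m b (pb a c))

/-- A representation of a Poisson algebra (pointwise form). -/
def IsPoissonRepFun (m : A → A → A) (pb : A → A → A) (μ ρb : A → V → V) : Prop :=
  (∀ a b v, μ (m a b) v = μ a (μ b v)) ∧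
  (∀ a b v, ρb (pb a b) v = ρb a (ρb b v) - ρb b (ρb a v)) ∧
  (∀ a b v, μ (pb a b) v = ρb a (μ b v) - μ b (ρb a v)) ∧
  (∀ a b v, ρb (m a b) v = μ a (ρb b v) + μ b (ρb a v))

/-- A Poisson 2-cocycle. -/
def IsPoisson2CocycleFun (m pb : A → A → A) (μ ρb : A → V → V)
    (φ ψb : A → A → V) : Prop :=
  IsHarrison2CocycleFun m μ φ ∧
  (∀ a b, ψb a b = - ψb b a) ∧
  (∀ a b c, ρb a (ψb b c) + ρb b (ψb c a) + ρb c (ψb a b)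
      + ψb a (pb b c) + ψb b (pb c a) + ψb c (pb a b) = 0) ∧
  (∀ a b c, ψb a (m b c) + ρb a (φ b c) =
      φ b (pb a c) + μ b (ψb a c) + φ (pb a b) c + μ c (ψb a b))

/-- A Nijenhuis operator on a Nambu-Poisson algebra. -/
def IsNijenhuisFun (m : A → A → A) (br : A → A → A → A) (N : A → A) : Prop :=
  (∀ a b, m (N a) (N b) = N (m (N a) b + m a (N b) - N (m a b))) ∧
  (∀ a b c, br (N a) (N b) (N c) =
      N (br (N a) (N b) c + br (N a) b (N c) + br a (N b) (N c)
        - N (br (N a) b c + br a (N b) c + br a b (N c) - N (br a b c))))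

/-- The total multiplication `a ⊙ b = a ⋄ b + b ⋄ a + a * b` of an NS-commutative algebra. -/
def odotFun (d s : A → A → A) (a b : A) : A := d a b + d b a + s a b

/-- The total bracket `{{a,b,c}} = [a,b,c] + [b,c,a] + [c,a,b] + ⟦a,b,c⟧` of an NS-3-Lie algebra. -/
def ttotFun (t l : A → A → A → A) (a b c : A) : A :=
  t a b c + t b c a + t c a b + l a b c

/-- An NS-commutative algebra. -/
def IsNSCommFun (d s : A → A → A) : Prop :=
  (∀ a b, s a b = s b a) ∧
  (∀ a b c, d a (d b c) = d (odotFun d s a b) c) ∧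
  (∀ a b c, d a (s b c) + s a (odotFun d s b c) = d b (s a c) + s b (odotFun d s a c))

/-- An NS-3-Lie algebra. -/
def IsNSThreeLieFun (t l : A → A → A → A) : Prop :=
  (∀ a b c, t a b c = - t b a c) ∧
  (∀ a b c, l a b c = - l b a c) ∧ (∀ a b c, l a b c = - l a c b) ∧
  (∀ a b c d e, t a b (t c d e) =
      t (ttotFun t l a b c) d e + t c (ttotFun t l a b d) e + t c d (t a b e)) ∧
  (∀ a b c d e, t (ttotFun t l a b c) d e =
      t a b (t c d e) + t b c (t a d e) + t c a (t b d e)) ∧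
  (∀ a b c d e, l a b (ttotFun t l c d e) + t a b (l c d e) =
      l (ttotFun t l a b c) d e + l c (ttotFun t l a b d) e + l c d (ttotFun t l a b e)
      + t d e (l a b c) + t e c (l a b d) + t c d (l a b e))

/-- An NS-Nambu-Poisson algebra. -/
def IsNSNambuPoissonFun (d s : A → A → A) (t l : A → A → A → A) : Prop :=
  IsNSCommFun d s ∧ IsNSThreeLieFun t l ∧
  (∀ a b c x, d (ttotFun t l a b c) x = t a b (d c x) - d c (t a b x)) ∧
  (∀ a b c x, t (odotFun d s a b) c x = d a (t b c x) + d b (t a c x)) ∧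
  (∀ a b c x, l a b (odotFun d s c x) + t a b (s c x) =
      s c (ttotFun t l a b x) + d c (l a b x) + s (ttotFun t l a b c) x + d x (l a b c))

/-- A `(φ,ψ)`-twisted O-operator. -/
def IsTwistedOFun (m : A → A → A) (br : A → A → A → A)
    (μ : A → V → V) (ρ : A → A → V → V)
    (φ : A → A → V) (ψ : A → A → A → V) (r : V → A) : Prop :=
  (∀ u v, m (r u) (r v) = r (μ (r u) v + μ (r v) u + φ (r u) (r v))) ∧
  (∀ u v w, br (r u) (r v) (r w) =
      r (ρ (r u) (r v) w + ρ (r v) (r w) u + ρ (r w) (r u) v + ψ (r u) (r v) (r w)))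

theorem statement18 {k : Type*} [Field k] [CharZero k]
    {A : Type*} [AddCommGroup A] [Module k A]
    {V : Type*} [AddCommGroup V] [Module k V]
    (m : A →ₗ[k] A →ₗ[k] A) (br : A →ₗ[k] A →ₗ[k] A →ₗ[k] A)
    (μ : A →ₗ[k] V →ₗ[k] V) (ρ : A →ₗ[k] A →ₗ[k] V →ₗ[k] V)
    (φ : A →ₗ[k] A →ₗ[k] V) (ψ : A →ₗ[k] A →ₗ[k] A →ₗ[k] V)
    (hA : IsNambuPoissonFun (fun a b => m a b) (fun a b c => br a b c))
    (hrep : IsNPRepFun (fun a b => m a b) (fun a b c => br a b c)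
        (fun a v => μ a v) (fun a b v => ρ a b v))
    (hcoc : IsNP2CocycleFun (fun a b => m a b) (fun a b c => br a b c)
        (fun a v => μ a v) (fun a b v => ρ a b v)
        (fun a b => φ a b) (fun a b c => ψ a b c))
    (r : V →ₗ[k] A)
    (hr : IsTwistedOFun (fun a b => m a b) (fun a b c => br a b c)
        (fun a v => μ a v) (fun a b v => ρ a b v)
        (fun a b => φ a b) (fun a b c => ψ a b c) (fun v => r v)) :
    IsNambuPoissonFun
        (fun u v => μ (r u) v + μ (r v) u + φ (r u) (r v))
        (fun u v w => ρ (r u) (r v) w + ρ (r v) (r w) u + ρ (r w) (r u) v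
          + ψ (r u) (r v) (r w))
      ∧ (∀ u v, r (μ (r u) v + μ (r v) u + φ (r u) (r v)) = m (r u) (r v))
      ∧ (∀ u v w, r (ρ (r u) (r v) w + ρ (r v) (r w) u + ρ (r w) (r u) v
            + ψ (r u) (r v) (r w)) = br (r u) (r v) (r w)) := by
  obtain ⟨hrm0, hrbr0⟩ := hr
  have hrm : ∀ u v : V, r (μ (r u) v + μ (r v) u + φ (r u) (r v)) = m (r u) (r v) :=
    fun u v => (hrm0 u v).symm
  have hrbr : ∀ u v w : V, r (ρ (r u) (r v) w + ρ (r v) (r w) u + ρ (r w) (r u) v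
      + ψ (r u) (r v) (r w)) = br (r u) (r v) (r w) := fun u v w => (hrbr0 u v w).symm
  obtain ⟨hμ0, ⟨hρs0, hρFI0, hρ30⟩, hμbr0, hρm0⟩ := hrep
  obtain ⟨⟨hφs0, hφc0⟩, ⟨hψ10, hψ20, hψc0⟩, hmix0⟩ := hcoc
  have hmc : ∀ a b : A, m a b = m b a := hA.1.1
  have hμ : ∀ (a b : A) (x : V), μ (m a b) x = μ a (μ b x) := hμ0
  have hρs : ∀ (a b : A) (x : V), ρ a b x = - ρ b a x := hρs0
  have hρFI : ∀ (a b c d : A) (x : V), ρ a b (ρ c d x) - ρ c d (ρ a b x)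
      = ρ (br a b c) d x + ρ c (br a b d) x := hρFI0
  have hρ3 : ∀ (a b c d : A) (x : V), ρ (br a b c) d x
      = ρ a b (ρ c d x) + ρ b c (ρ a d x) + ρ c a (ρ b d x) := hρ30
  have hμbr : ∀ (a b c : A) (x : V), μ (br a b c) x = ρ a b (μ c x) - μ c (ρ a b x) := hμbr0
  have hρm : ∀ (a b c : A) (x : V), ρ a (m b c) x = μ b (ρ a c x) + μ c (ρ a b x) := hρm0
  have hφs : ∀ a b : A, φ a b = φ b a := hφs0
  have hφc : ∀ a b c : A, μ a (φ b c) - φ (m a b) c + φ a (m b c) - μ c (φ a b) = 0 := hφc0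
  have hψ1 : ∀ a b c : A, ψ a b c = - ψ b a c := hψ10
  have hψ2 : ∀ a b c : A, ψ a b c = - ψ a c b := hψ20
  have hψc : ∀ a b c d e : A, ψ a b (br c d e) + ρ a b (ψ c d e)
      = ψ (br a b c) d e + ψ c (br a b d) e + ψ c d (br a b e)
        + ρ d e (ψ a b c) + ρ e c (ψ a b d) + ρ c d (ψ a b e) := hψc0
  have hmix : ∀ a b c d : A, ψ a b (m c d) + ρ a b (φ c d)
      = φ c (br a b d) + μ c (ψ a b d) + φ (br a b c) d + μ d (ψ a b c) := hmix0
  have hμswap : ∀ (a b : A) (x : V), μ a (μ b x) = μ b (μ a x) := by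
    intro a b x
    rw [← hμ a b x, hmc a b, hμ b a x]
  refine ⟨⟨⟨?_, ?_⟩, ⟨?_, ?_, ?_⟩, ?_⟩, hrm, hrbr⟩
  · -- commutativity
    intro u v
    beta_reduce
    linear_combination (norm := abel) hφs (r u) (r v)
  · -- associativity
    intro u v w
    beta_reduce
    rw [hrm u v, hrm v w]
    simp only [map_add]
    linear_combination (norm := abel) hμ (r u) (r v) w + hμswap (r w) (r u) v
      + hμswap (r w) (r v) u - hμ (r v) (r w) u - hφc (r u) (r v) (r w)
  · -- skew-symmetry in the first two arguments
    intro u v w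
    beta_reduce
    linear_combination (norm := abel) hρs (r u) (r v) w + hρs (r w) (r u) v
      + hρs (r v) (r w) u + hψ1 (r u) (r v) (r w)
  · -- skew-symmetry in the last two arguments
    intro u v w
    beta_reduce
    linear_combination (norm := abel) hρs (r u) (r v) w + hρs (r v) (r w) u
      + hρs (r w) (r u) v + hψ2 (r u) (r v) (r w)
  · -- fundamental identity
    intro u v x y z
    beta_reduce
    rw [hrbr x y z, hrbr u v x, hrbr u v y, hrbr u v z]
    simp only [map_add]
    set a := r u with ha
    set b := r v with hb
    set c := r x with hc
    set d := r y with hd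
    set e := r z with he
    have h4 : ρ b (br c d e) u
        = ρ c d (ρ b e u) + ρ d e (ρ b c u) + ρ e c (ρ b d u) := by
      rw [hρs b (br c d e) u, hρ3 c d e b u, hρs e b u, hρs c b u, hρs d b u,
        map_neg, map_neg, map_neg]
      abel
    have h5 : ρ (br c d e) a v
        = ρ c d (ρ e a v) + ρ d e (ρ c a v) + ρ e c (ρ d a v) := hρ3 c d e a v
    linear_combination (norm := abel) hρFI a b c d z + hρFI a b d e x
      + hρFI a b e c y + h4 + h5 + hψc a b c d e
  · -- Leibniz rule
    intro u v x y
    beta_reduce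
    rw [hrm x y, hrbr u v x, hrbr u v y]
    simp only [map_add]
    set a := r u with ha
    set b := r v with hb
    set c := r x with hc
    set d := r y with hd
    have hv : ρ (m c d) a v = μ c (ρ d a v) + μ d (ρ c a v) := by
      rw [hρs (m c d) a v, hρm a c d v, hρs a d v, hρs a c v, map_neg, map_neg]
      abel
    linear_combination (norm := abel) - hμbr a b c y - hμbr a b d x
      + hρm b c d u + hv + hmix a b c d

end NPPaper
end

section
/- Let r: V→A be a (φ,ψ)-twisted O-operator on a Nambu-Poisson algebra (A, ·, {,,}) over a field k of characteristic 0 with respect to a representation (V;μ,ρ). Define on V the operations u⋄_r v := μ(r(u))v, u*_r v := φ(r(u),r(v)), [u,v,w]_r := ρ(r(u),r(v))w, and ⟦u,v,w⟧_r := ψ(r(u),r(v),r(w)). Then (V, ⋄_r, *_r, [,,]_r, ⟦,,⟧_r) is an NS-Nambu-Poisson algebra, and its subadjacent Nambu-Poisson algebra coincides with (V, ·_r, {,,}_r), where u·_r v := μ(r(u))v + μ(r(v))u + φ(r(u),r(v)) and {u,v,w}_r := ρ(r(u),r(v))w + ρ(r(v),r(w))u + ρ(r(w),r(u))v + ψ(r(u),r(v),r(w)).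 -/
namespace NPPaper

variable {A V : Type*} [AddCommGroup A] [AddCommGroup V]

theorem statement19 {k : Type*} [Field k] [CharZero k]
    {A : Type*} [AddCommGroup A] [Module k A]
    {V : Type*} [AddCommGroup V] [Module k V]
    (m : A →ₗ[k] A →ₗ[k] A) (br : A →ₗ[k] A →ₗ[k] A →ₗ[k] A)
    (μ : A →ₗ[k] V →ₗ[k] V) (ρ : A →ₗ[k] A →ₗ[k] V →ₗ[k] V)
    (φ : A →ₗ[k] A →ₗ[k] V) (ψ : A →ₗ[k] A →ₗ[k] A →ₗ[k] V)
    (hA : IsNambuPoissonFun (fun a b => m a b) (fun a b c => br a b c))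
    (hrep : IsNPRepFun (fun a b => m a b) (fun a b c => br a b c)
        (fun a v => μ a v) (fun a b v => ρ a b v))
    (hcoc : IsNP2CocycleFun (fun a b => m a b) (fun a b c => br a b c)
        (fun a v => μ a v) (fun a b v => ρ a b v)
        (fun a b => φ a b) (fun a b c => ψ a b c))
    (r : V →ₗ[k] A)
    (hr : IsTwistedOFun (fun a b => m a b) (fun a b c => br a b c)
        (fun a v => μ a v) (fun a b v => ρ a b v)
        (fun a b => φ a b) (fun a b c => ψ a b c) (fun v => r v)) :
    IsNSNambuPoissonFun
        (fun u v => μ (r u) v) (fun u v => φ (r u) (r v))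
        (fun u v w => ρ (r u) (r v) w) (fun u v w => ψ (r u) (r v) (r w))
      ∧ (∀ u v, odotFun (fun u v => μ (r u) v) (fun u v => φ (r u) (r v)) u v
          = μ (r u) v + μ (r v) u + φ (r u) (r v))
      ∧ (∀ u v w, ttotFun (fun u v w => ρ (r u) (r v) w)
            (fun u v w => ψ (r u) (r v) (r w)) u v w
          = ρ (r u) (r v) w + ρ (r v) (r w) u + ρ (r w) (r u) v
            + ψ (r u) (r v) (r w)) := by
  have hm : ∀ u v, m (r u) (r v)
      = r (μ (r u) v + μ (r v) u + φ (r u) (r v)) := hr.1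
  have hbr : ∀ u v w, br (r u) (r v) (r w)
      = r (ρ (r u) (r v) w + ρ (r v) (r w) u + ρ (r w) (r u) v
          + ψ (r u) (r v) (r w)) := hr.2
  have mcomm : ∀ a b, m a b = m b a := hA.1.1
  have μm : ∀ (a b : A) (v : V), μ (m a b) v = μ a (μ b v) := hrep.1
  have ρsk : ∀ (a b : A) (v : V), ρ a b v = - ρ b a v := hrep.2.1.1
  have ρfund : ∀ (a b c d : A) (v : V),
      ρ a b (ρ c d v) - ρ c d (ρ a b v)
        = ρ (br a b c) d v + ρ c (br a b d) v := hrep.2.1.2.1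
  have ρ3 : ∀ (a b c d : A) (v : V),
      ρ (br a b c) d v
        = ρ a b (ρ c d v) + ρ b c (ρ a d v) + ρ c a (ρ b d v) := hrep.2.1.2.2
  have μbr : ∀ (a b c : A) (v : V),
      μ (br a b c) v = ρ a b (μ c v) - μ c (ρ a b v) := hrep.2.2.1
  have ρm : ∀ (a b c : A) (v : V),
      ρ a (m b c) v = μ b (ρ a c v) + μ c (ρ a b v) := hrep.2.2.2
  have φsym : ∀ a b : A, φ a b = φ b a := hcoc.1.1
  have φcoc : ∀ a b c : A,
      μ a (φ b c) - φ (m a b) c + φ a (m b c) - μ c (φ a b) = 0 := hcoc.1.2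
  have ψsk1 : ∀ a b c : A, ψ a b c = - ψ b a c := hcoc.2.1.1
  have ψsk2 : ∀ a b c : A, ψ a b c = - ψ a c b := hcoc.2.1.2.1
  have ψcoc : ∀ a b c d e : A,
      ψ a b (br c d e) + ρ a b (ψ c d e)
        = ψ (br a b c) d e + ψ c (br a b d) e + ψ c d (br a b e)
          + ρ d e (ψ a b c) + ρ e c (ψ a b d) + ρ c d (ψ a b e) := hcoc.2.1.2.2
  have mix : ∀ a b c d : A,
      ψ a b (m c d) + ρ a b (φ c d)
        = φ c (br a b d) + μ c (ψ a b d) + φ (br a b c) d + μ d (ψ a b c) :=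
    hcoc.2.2
  refine ⟨⟨⟨?_, ?_, ?_⟩, ⟨?_, ?_, ?_, ?_, ?_, ?_⟩, ?_, ?_, ?_⟩,
    fun u v => rfl, fun u v w => rfl⟩
  · exact fun u v => φsym (r u) (r v)
  · intro a b c
    simp only [odotFun]
    rw [← hm a b]
    exact (μm (r a) (r b) c).symm
  · intro a b c
    simp only [odotFun]
    rw [← hm b c, ← hm a c]
    have h1 := φcoc (r a) (r b) (r c)
    have h2 := φcoc (r b) (r a) (r c)
    rw [mcomm (r b) (r a), φsym (r b) (r a)] at h2
    linear_combination (norm := abel) h1 - h2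
  · exact fun a b c => ρsk (r a) (r b) c
  · exact fun a b c => ψsk1 (r a) (r b) (r c)
  · exact fun a b c => ψsk2 (r a) (r b) (r c)
  · intro a b c d e
    simp only [ttotFun]
    rw [← hbr a b c, ← hbr a b d]
    linear_combination (norm := abel) ρfund (r a) (r b) (r c) (r d) e
  · intro a b c d e
    simp only [ttotFun]
    rw [← hbr a b c]
    exact ρ3 (r a) (r b) (r c) (r d) e
  · intro a b c d e
    simp only [ttotFun]
    rw [← hbr c d e, ← hbr a b c, ← hbr a b d, ← hbr a b e]
    exact ψcoc (r a) (r b) (r c) (r d) (r e)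
  · intro a b c x
    simp only [ttotFun]
    rw [← hbr a b c]
    exact μbr (r a) (r b) (r c) x
  · intro a b c x
    simp only [odotFun]
    rw [← hm a b]
    have h := ρm (r c) (r a) (r b) x
    rw [ρsk (m (r a) (r b)) (r c) x, h, ρsk (r c) (r b) x, ρsk (r c) (r a) x,
      map_neg, map_neg]
    abel
  · intro a b c x
    simp only [odotFun, ttotFun]
    rw [← hm c x, ← hbr a b x, ← hbr a b c]
    exact mix (r a) (r b) (r c) (r x)

end NPPaper
end
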